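/- arXiv:1504.03037 — 2 statements merged into one kernel-verified Lean document; each statement's English description precedes it below -/
import Mathlib

section
/- Let T be a complete CLO theory, let S be a sufficiently saturated model of T, and let Φ ∈ IT(T). Then the set Φ(S) of realizations of Φ in S, with its induced L_κ-structure, is either a singleton or a self-additive CLO. -/
open FirstOrder Language Set

/-- Relation symbols of the language `L_κ` of colored linear orders:
a binary `<` and a unary color predicate for each `i : ι`. -/
inductive CLORel (ι : Type) : ℕ → Type
  | lt : CLORel ι 2
  | color (i : ι) : CLORel ι 1

/-- The language `L_κ`, where the colors are indexed by `ι`. -/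
def CLOLang (ι : Type) : Language :=
  ⟨fun _ => Empty, CLORel ι⟩

/-- Interpretation of the relation symbols on a linear order `M` with colors `c`. -/
def cloRelMap {ι M : Type} [LinearOrder M] (c : ι → Set M) :
    ∀ {n}, CLORel ι n → (Fin n → M) → Prop
  | _, .lt => fun v => v 0 < v 1
  | _, .color i => fun v => v 0 ∈ c i

/-- The canonical `L_κ`-structure (a colored linear order, CLO) on a linear
order `M` whose colors are given by `c : ι → Set M`. -/
def CLOStr (ι M : Type) [LinearOrder M] (c : ι → Set M) : (CLOLang ι).Structure M where
  funMap := fun f => Empty.elim f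
  RelMap := cloRelMap c

/-- Satisfaction of an `L_κ`-formula in the CLO `(M, <, c)`. -/
def Sat {ι : Type} (M : Type) [LinearOrder M] (c : ι → Set M) {α : Type}
    (φ : (CLOLang ι).Formula α) (v : α → M) : Prop :=
  letI := CLOStr ι M c
  φ.Realize v

/-- The induced colors on a subset of a CLO. -/
def subColor {ι M : Type} (c : ι → Set M) (s : Set M) : ι → Set s :=
  fun i => {x | (x : M) ∈ c i}

/-- Elementary equivalence of CLOs. -/
def CLOEquiv (ι : Type) (M : Type) [LinearOrder M] (cM : ι → Set M)
    (N : Type) [LinearOrder N] (cN : ι → Set N) : Prop :=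
  letI := CLOStr ι M cM
  letI := CLOStr ι N cN
  M ≅[CLOLang ι] N

/-- Isomorphism of CLOs (as `L_κ`-structures). -/
def CLOIso (ι : Type) (M : Type) [LinearOrder M] (cM : ι → Set M)
    (N : Type) [LinearOrder N] (cN : ι → Set N) : Prop :=
  letI := CLOStr ι M cM
  letI := CLOStr ι N cN
  Nonempty (M ≃[CLOLang ι] N)

/-- The complete theory of a CLO. -/
def CLOTheory (ι : Type) (M : Type) [LinearOrder M] (c : ι → Set M) : (CLOLang ι).Theory :=
  letI := CLOStr ι M c
  (CLOLang ι).completeTheory M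

/-- The induced colors on a lexicographic sum `Σₗ i, A i` of CLOs. -/
def sigmaColor {ι I : Type} {A : I → Type} (c : ∀ i, ι → Set (A i)) :
    ι → Set (Σₗ i, A i) :=
  fun k => {x | (ofLex x).2 ∈ c (ofLex x).1 k}

/-- The induced colors on a two-term lexicographic sum `α ⊕ₗ β` of CLOs. -/
def sumColor2 {ι α β : Type} (ca : ι → Set α) (cb : ι → Set β) : ι → Set (α ⊕ₗ β) :=
  fun k => {x | Sum.elim (· ∈ ca k) (· ∈ cb k) (ofLex x)}

/-- The set defined by a parameter-free formula in one variable in a CLO. -/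
def FmlSet (ι : Type) (M : Type) [LinearOrder M] (c : ι → Set M)
    (φ : (CLOLang ι).Formula Unit) : Set M :=
  {x | Sat M c φ fun _ => x}

/-- A CLO is self-additive if it has more than one point and its only
convex parameter-free-definable subsets are `∅` and the whole order. -/
def SelfAdditive (ι : Type) (M : Type) [LinearOrder M] (c : ι → Set M) : Prop :=
  Nontrivial M ∧
    ∀ φ : (CLOLang ι).Formula Unit, (FmlSet ι M c φ).OrdConnected →
      FmlSet ι M c φ = ∅ ∨ FmlSet ι M c φ = Set.univ

/-- `a ∼ b`: some set definable with parameter `a` is convex, bounded above and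
below, and contains both `a` and `b`. -/
def SimRel (ι : Type) {M : Type} [LinearOrder M] (c : ι → Set M) (a b : M) : Prop :=
  ∃ φ : (CLOLang ι).Formula (Unit ⊕ Unit),
    (Set.OrdConnected {x | Sat M c φ (Sum.elim (fun _ => x) fun _ => a)}) ∧
    (∃ u : M, ∀ z ∈ {x | Sat M c φ (Sum.elim (fun _ => x) fun _ => a)}, z < u) ∧
    (∃ l : M, ∀ z ∈ {x | Sat M c φ (Sum.elim (fun _ => x) fun _ => a)}, l < z) ∧
    a ∈ {x | Sat M c φ (Sum.elim (fun _ => x) fun _ => a)} ∧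
    b ∈ {x | Sat M c φ (Sum.elim (fun _ => x) fun _ => a)}

/-- `f : M → N` is an elementary map of CLOs. -/
def IsElemMap (ι : Type) {M N : Type} [LinearOrder M] [LinearOrder N]
    (cM : ι → Set M) (cN : ι → Set N) (f : M → N) : Prop :=
  ∀ (k : ℕ) (φ : (CLOLang ι).Formula (Fin k)) (v : Fin k → M),
    Sat M cM φ v ↔ Sat N cN φ (f ∘ v)

/-- A subset of a CLO, with its induced structure, is an elementary substructure. -/
def IsElemSubset (ι : Type) (B : Type) [LinearOrder B] (cB : ι → Set B) (s : Set B) : Prop :=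
  IsElemMap ι (subColor cB s) cB (Subtype.val : s → B)

/-- A complete `L_κ`-theory is ℵ₀-categorical: any two at-most-countable CLO
models of it are isomorphic.  (Finite and empty models are allowed.) -/
def Aleph0CatTheory (ι : Type) (T : (CLOLang ι).Theory) : Prop :=
  ∀ (N₁ N₂ : Type) (i₁ : LinearOrder N₁) (i₂ : LinearOrder N₂)
    (c₁ : ι → Set N₁) (c₂ : ι → Set N₂),
    Countable N₁ → Countable N₂ →
    (letI := i₁; CLOTheory ι N₁ c₁) = T → (letI := i₂; CLOTheory ι N₂ c₂) = T →
    (letI := i₁; letI := i₂; CLOIso ι N₁ c₁ N₂ c₂)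

/-- `φ` is a convex formula for the complete theory of the CLO `(M₀, c₀)`:
its realizations in every model of that theory form a convex set. -/
def ConvexFml (ι : Type) (M₀ : Type) [LinearOrder M₀] (c₀ : ι → Set M₀)
    (φ : (CLOLang ι).Formula Unit) : Prop :=
  ∀ (B : Type) (iB : LinearOrder B) (cB : ι → Set B),
    (letI := iB; CLOEquiv ι B cB M₀ c₀) → (letI := iB; Set.OrdConnected (FmlSet ι B cB φ))

/-- The set of common realizations of a set of one-variable formulas in a CLO. -/
def TypeSet (ι : Type) (M : Type) [LinearOrder M] (c : ι → Set M)
    (Φ : Set ((CLOLang ι).Formula Unit)) : Set M :=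
  {x | ∀ φ ∈ Φ, Sat M c φ fun _ => x}

/-- A set of one-variable formulas is consistent with the complete theory of
`(M₀, c₀)`: it is realized in some model of that theory. -/
def TypeConsistent (ι : Type) (M₀ : Type) [LinearOrder M₀] (c₀ : ι → Set M₀)
    (Φ : Set ((CLOLang ι).Formula Unit)) : Prop :=
  ∃ (B : Type) (iB : LinearOrder B) (cB : ι → Set B),
    (letI := iB; CLOEquiv ι B cB M₀ c₀) ∧ (letI := iB; ∃ b : B, b ∈ TypeSet ι B cB Φ)

/-- `Φ` is a convex type of the complete theory of `(M₀, c₀)`: a maximal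
consistent set of convex formulas over `∅`.  `IT(T)` is the set of all such. -/
def IsConvexType (ι : Type) (M₀ : Type) [LinearOrder M₀] (c₀ : ι → Set M₀)
    (Φ : Set ((CLOLang ι).Formula Unit)) : Prop :=
  (∀ φ ∈ Φ, ConvexFml ι M₀ c₀ φ) ∧ TypeConsistent ι M₀ c₀ Φ ∧
    ∀ ψ, ConvexFml ι M₀ c₀ ψ → TypeConsistent ι M₀ c₀ (insert ψ Φ) → ψ ∈ Φ

/-- A convex type is isolated if it contains a convex formula contained in no
other convex type. -/
def IsolatedCT (ι : Type) (M₀ : Type) [LinearOrder M₀] (c₀ : ι → Set M₀)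
    (Φ : Set ((CLOLang ι).Formula Unit)) : Prop :=
  ∃ φ ∈ Φ, ConvexFml ι M₀ c₀ φ ∧
    ∀ Ψ, IsConvexType ι M₀ c₀ Ψ → φ ∈ Ψ → Ψ = Φ

/-- A CLO is ℵ₀-saturated: every finitely-satisfiable set of formulas in one
variable over finitely many parameters is realized. -/
def Aleph0Saturated (ι : Type) (S : Type) [LinearOrder S] (cS : ι → Set S) : Prop :=
  ∀ (m : ℕ) (a : Fin m → S) (p : Set ((CLOLang ι).Formula (Unit ⊕ Fin m))),
    (∀ q : Finset ((CLOLang ι).Formula (Unit ⊕ Fin m)), ↑q ⊆ p →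
      ∃ x : S, ∀ φ ∈ q, Sat S cS φ (Sum.elim (fun _ => x) a)) →
    ∃ x : S, ∀ φ ∈ p, Sat S cS φ (Sum.elim (fun _ => x) a)

/-- A CLO is strongly ℵ₀-homogeneous: finite tuples with the same complete type
are conjugate under an automorphism. -/
def StronglyAleph0Homogeneous (ι : Type) (S : Type) [LinearOrder S] (cS : ι → Set S) : Prop :=
  ∀ (m : ℕ) (a b : Fin m → S),
    (∀ φ : (CLOLang ι).Formula (Fin m), Sat S cS φ a ↔ Sat S cS φ b) →
    ∃ g : S ≃ S, (∀ x y : S, x < y ↔ g x < g y) ∧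
      (∀ (k : ι) (x : S), x ∈ cS k ↔ g x ∈ cS k) ∧ ∀ i, g (a i) = b i

/-- Sufficiently saturated: ℵ₀-saturated and strongly ℵ₀-homogeneous. -/
def SuffSaturated (ι : Type) (S : Type) [LinearOrder S] (cS : ι → Set S) : Prop :=
  Aleph0Saturated ι S cS ∧ StronglyAleph0Homogeneous ι S cS

/-- The complete theory of `(M₀, c₀)` is locally simple: for every sufficiently
saturated model `S` and every convex type `Φ`, the theory `T_Φ = Th(Φ(S))` is
ℵ₀-categorical. -/
def LocallySimple (ι : Type) (M₀ : Type) [LinearOrder M₀] (c₀ : ι → Set M₀) : Prop :=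
  ∀ (S : Type) [LinearOrder S], ∀ (cS : ι → Set S),
    CLOEquiv ι S cS M₀ c₀ → SuffSaturated ι S cS →
    ∀ Φ, IsConvexType ι M₀ c₀ Φ →
      Aleph0CatTheory ι
        (CLOTheory ι (TypeSet ι S cS Φ) (subColor cS (TypeSet ι S cS Φ)))

/-- A finite set of pairs is a partial isomorphism of CLOs: it preserves `<`,
equality, and each color, in both directions. -/
def IsPartialIso (ι : Type) {M N : Type} [LinearOrder M] [LinearOrder N]
    (cM : ι → Set M) (cN : ι → Set N) (f : Finset (M × N)) : Prop :=
  ∀ p ∈ f, ∀ q ∈ f,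
    (p.1 < q.1 ↔ p.2 < q.2) ∧ (p.1 = q.1 ↔ p.2 = q.2) ∧
    ∀ k, p.1 ∈ cM k ↔ p.2 ∈ cN k

/-- Back-and-forth equivalence of CLOs: a nonempty family of finite partial
isomorphisms with the back-and-forth extension properties. -/
def BackForthEquiv (ι : Type) (M : Type) [LinearOrder M] (cM : ι → Set M)
    (N : Type) [LinearOrder N] (cN : ι → Set N) : Prop :=
  ∃ F : Set (Finset (M × N)), F.Nonempty ∧ (∀ f ∈ F, IsPartialIso ι cM cN f) ∧
    (∀ f ∈ F, ∀ m : M, ∃ g ∈ F, f ⊆ g ∧ ∃ n : N, (m, n) ∈ g) ∧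
    (∀ f ∈ F, ∀ n : N, ∃ g ∈ F, f ⊆ g ∧ ∃ m : M, (m, n) ∈ g)

/-- The set of complete theories `Th(Φ(A))` as `A` ranges over models of the
complete theory of `(M₀, c₀)` (including the theory of the empty structure,
in case `Φ` is omitted). -/
def TheoriesAt (ι : Type) (M₀ : Type) [LinearOrder M₀] (c₀ : ι → Set M₀)
    (Φ : Set ((CLOLang ι).Formula Unit)) : Set ((CLOLang ι).Theory) :=
  {T | ∃ (A : Type) (iA : LinearOrder A) (cA : ι → Set A),
    (letI := iA; CLOEquiv ι A cA M₀ c₀) ∧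
    T = (letI := iA; CLOTheory ι (TypeSet ι A cA Φ) (subColor cA (TypeSet ι A cA Φ)))}


namespace Stmt10Aux

open FirstOrder Language Set

variable {ι : Type}

/-! ### Basic satisfaction lemmas -/

lemma sat_inf {M : Type} [LinearOrder M] (c : ι → Set M) {α : Type}
    (φ ψ : (CLOLang ι).Formula α) (v : α → M) :
    Sat M c (φ ⊓ ψ) v ↔ Sat M c φ v ∧ Sat M c ψ v := by
  letI := CLOStr ι M c
  exact Formula.realize_inf

lemma sat_not {M : Type} [LinearOrder M] (c : ι → Set M) {α : Type}
    (φ : (CLOLang ι).Formula α) (v : α → M) :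
    Sat M c φ.not v ↔ ¬ Sat M c φ v := by
  letI := CLOStr ι M c
  exact Formula.realize_not

lemma sat_top {M : Type} [LinearOrder M] (c : ι → Set M) {α : Type} (v : α → M) :
    Sat M c (⊤ : (CLOLang ι).Formula α) v := by
  letI := CLOStr ι M c
  exact Formula.realize_top.2 trivial

lemma sat_relabel_inl {M : Type} [LinearOrder M] (c : ι → Set M) {m : ℕ}
    (θ : (CLOLang ι).Formula Unit) (x : M) (w : Fin m → M) :
    Sat M c (θ.relabel Sum.inl) (Sum.elim (fun _ => x) w) ↔ Sat M c θ (fun _ => x) := by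
  letI := CLOStr ι M c
  show (θ.relabel Sum.inl).Realize _ ↔ θ.Realize _
  rw [Formula.realize_relabel, Sum.elim_comp_inl]

lemma sat_relabel_const {M : Type} [LinearOrder M] (c : ι → Set M)
    (φ : (CLOLang ι).Formula (Fin 1)) (x : M) :
    Sat M c (φ.relabel (fun _ : Fin 1 => ())) (fun _ => x) ↔ Sat M c φ (fun _ => x) := by
  letI := CLOStr ι M c
  show (φ.relabel _).Realize _ ↔ φ.Realize _
  rw [Formula.realize_relabel]
  exact Iff.rfl

/-! ### Conjunction of a list of formulas -/

def listConj {α : Type} : List ((CLOLang ι).Formula α) → (CLOLang ι).Formula α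
  | [] => ⊤
  | φ :: l => φ ⊓ listConj l

lemma sat_listConj {M : Type} [LinearOrder M] (c : ι → Set M) {α : Type}
    (l : List ((CLOLang ι).Formula α)) (v : α → M) :
    Sat M c (listConj l) v ↔ ∀ φ ∈ l, Sat M c φ v := by
  induction l with
  | nil => simpa [listConj] using sat_top c v
  | cons φ l ih =>
    rw [listConj, sat_inf, ih]
    constructor
    · rintro ⟨h1, h2⟩ ψ hψ
      rcases List.mem_cons.1 hψ with rfl | hψ'
      · exact h1
      · exact h2 ψ hψ'
    · intro h
      exact ⟨h φ List.mem_cons_self, fun ψ hψ => h ψ (List.mem_cons_of_mem _ hψ)⟩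

/-! ### Particular formulas -/

/-- `b < x`, with `x` the `Unit` variable and `b` the parameter. -/
def gtFml : (CLOLang ι).Formula (Unit ⊕ Fin 1) :=
  Relations.formula₂ CLORel.lt (Term.var (Sum.inr 0)) (Term.var (Sum.inl ()))

/-- `x < b`, with `x` the `Unit` variable and `b` the parameter. -/
def ltFml : (CLOLang ι).Formula (Unit ⊕ Fin 1) :=
  Relations.formula₂ CLORel.lt (Term.var (Sum.inl ())) (Term.var (Sum.inr 0))

lemma sat_gtFml {M : Type} [LinearOrder M] (c : ι → Set M) (x b : M) :
    Sat M c (gtFml (ι := ι)) (Sum.elim (fun _ => x) (fun _ => b)) ↔ b < x := by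
  letI := CLOStr ι M c
  show (Relations.formula₂ _ _ _).Realize _ ↔ _
  erw [Formula.realize_rel₂]
  show cloRelMap c CLORel.lt _ ↔ _
  simp [cloRelMap]

lemma sat_ltFml {M : Type} [LinearOrder M] (c : ι → Set M) (x b : M) :
    Sat M c (ltFml (ι := ι)) (Sum.elim (fun _ => x) (fun _ => b)) ↔ x < b := by
  letI := CLOStr ι M c
  show (Relations.formula₂ _ _ _).Realize _ ↔ _
  erw [Formula.realize_rel₂]
  show cloRelMap c CLORel.lt _ ↔ _
  simp [cloRelMap]

lemma realize_eq_sat {M : Type} [LinearOrder M] (c : ι → Set M) {φ : (CLOLang ι).Formula Unit}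
    {v : Unit → M} {xs : Fin 0 → M} :
    (letI := CLOStr ι M c; BoundedFormula.Realize φ v xs) ↔ Sat M c φ v := by
  letI := CLOStr ι M c
  rw [Subsingleton.elim xs (default : Fin 0 → M)]
  exact Iff.rfl

/-- `∃ y (φ(y) ∧ ¬ y < x)` : the downward closure of `φ`. -/
def dnFml (φ : (CLOLang ι).Formula Unit) : (CLOLang ι).Formula Unit :=
  BoundedFormula.ex
    ((BoundedFormula.relabel (fun _ => Sum.inr (0 : Fin 1)) φ :
        (CLOLang ι).BoundedFormula Unit 1) ⊓
      (Relations.boundedFormula₂ CLORel.lt (Term.var (Sum.inr 0))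
        (Term.var (Sum.inl ()))).not)

/-- `∃ y (φ(y) ∧ ¬ x < y)` : the upward closure of `φ`. -/
def upFml (φ : (CLOLang ι).Formula Unit) : (CLOLang ι).Formula Unit :=
  BoundedFormula.ex
    ((BoundedFormula.relabel (fun _ => Sum.inr (0 : Fin 1)) φ :
        (CLOLang ι).BoundedFormula Unit 1) ⊓
      (Relations.boundedFormula₂ CLORel.lt (Term.var (Sum.inl ()))
        (Term.var (Sum.inr 0))).not)

lemma sat_dnFml {M : Type} [LinearOrder M] (c : ι → Set M)
    (φ : (CLOLang ι).Formula Unit) (x : M) :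
    Sat M c (dnFml φ) (fun _ => x) ↔ ∃ y : M, Sat M c φ (fun _ => y) ∧ x ≤ y := by
  letI := CLOStr ι M c
  show (BoundedFormula.ex _).Realize _ _ ↔ _
  simp only [BoundedFormula.realize_ex, BoundedFormula.realize_inf, BoundedFormula.realize_not,
    BoundedFormula.realize_rel₂, BoundedFormula.realize_relabel, Term.realize_var,
    Sum.elim_inr, Sum.elim_inl, Function.comp, realize_eq_sat c (φ := φ), CLOStr, cloRelMap,
    Fin.snoc_zero, Matrix.cons_val_zero, Matrix.cons_val_one, Matrix.head_cons, not_lt]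
  exact exists_congr fun a => and_congr Iff.rfl not_lt

lemma sat_upFml {M : Type} [LinearOrder M] (c : ι → Set M)
    (φ : (CLOLang ι).Formula Unit) (x : M) :
    Sat M c (upFml φ) (fun _ => x) ↔ ∃ y : M, Sat M c φ (fun _ => y) ∧ y ≤ x := by
  letI := CLOStr ι M c
  show (BoundedFormula.ex _).Realize _ _ ↔ _
  simp only [BoundedFormula.realize_ex, BoundedFormula.realize_inf, BoundedFormula.realize_not,
    BoundedFormula.realize_rel₂, BoundedFormula.realize_relabel, Term.realize_var,
    Sum.elim_inr, Sum.elim_inl, Function.comp, realize_eq_sat c (φ := φ), CLOStr, cloRelMap,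
    Fin.snoc_zero, Matrix.cons_val_zero, Matrix.cons_val_one, Matrix.head_cons, not_lt]
  exact exists_congr fun a => and_congr Iff.rfl not_lt

/-- existential closure, as a sentence -/
def exFml (φ : (CLOLang ι).Formula Unit) : (CLOLang ι).Sentence :=
  BoundedFormula.ex
    (BoundedFormula.relabel (fun _ => Sum.inr (0 : Fin 1)) φ :
      (CLOLang ι).BoundedFormula Empty 1)

lemma sat_exFml {M : Type} [LinearOrder M] (c : ι → Set M) (φ : (CLOLang ι).Formula Unit) :
    (letI := CLOStr ι M c; M ⊨ exFml φ) ↔ ∃ x : M, Sat M c φ (fun _ => x) := by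
  letI := CLOStr ι M c
  show (BoundedFormula.ex _).Realize _ _ ↔ _
  simp only [BoundedFormula.realize_ex, BoundedFormula.realize_relabel,
    realize_eq_sat c (φ := φ), Function.comp, Sum.elim_inr, Fin.snoc_zero]
  exact exists_congr fun a => Iff.rfl

/-! ### Automorphisms -/

/-- a `<`- and color-preserving bijection preserves satisfaction of all formulas -/
lemma sat_equiv {M : Type} [LinearOrder M] (c : ι → Set M) (g : M ≃ M)
    (hlt : ∀ x y : M, x < y ↔ g x < g y) (hc : ∀ (k : ι) (x : M), x ∈ c k ↔ g x ∈ c k)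
    {α : Type} (φ : (CLOLang ι).Formula α) (v : α → M) :
    Sat M c φ (⇑g ∘ v) ↔ Sat M c φ v := by
  letI := CLOStr ι M c
  let e : (letI := CLOStr ι M c; M ≃[CLOLang ι] M) :=
    { toEquiv := g
      map_fun' := fun f => f.elim
      map_rel' := by
        intro n r xv
        cases r with
        | lt => exact (hlt (xv 0) (xv 1)).symm
        | color i => exact (hc i (xv 0)).symm }
  exact StrongHomClass.realize_formula e φ

lemma sat_equiv' {M : Type} [LinearOrder M] (c : ι → Set M) (g : M ≃ M)
    (hlt : ∀ x y : M, x < y ↔ g x < g y) (hc : ∀ (k : ι) (x : M), x ∈ c k ↔ g x ∈ c k)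
    (φ : (CLOLang ι).Formula Unit) (x : M) :
    Sat M c φ (fun _ => g x) ↔ Sat M c φ (fun _ => x) :=
  sat_equiv c g hlt hc φ (fun _ => x)

lemma tp_iff_of_imp {S : Type} [LinearOrder S] (cS : ι → Set S) (a x : S)
    (h : ∀ θ : (CLOLang ι).Formula Unit,
      Sat S cS θ (fun _ => a) → Sat S cS θ (fun _ => x)) :
    ∀ θ : (CLOLang ι).Formula Unit, Sat S cS θ (fun _ => a) ↔ Sat S cS θ (fun _ => x) := by
  intro θ
  refine ⟨h θ, fun hx => ?_⟩
  by_contra ha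
  exact (sat_not cS θ _).1 (h θ.not ((sat_not cS θ _).2 ha)) hx

lemma exists_auto {S : Type} [LinearOrder S] (cS : ι → Set S)
    (hhom : StronglyAleph0Homogeneous ι S cS) (a b : S)
    (h : ∀ θ : (CLOLang ι).Formula Unit,
      Sat S cS θ (fun _ => a) ↔ Sat S cS θ (fun _ => b)) :
    ∃ g : S ≃ S, (∀ x y : S, x < y ↔ g x < g y) ∧
      (∀ (k : ι) (x : S), x ∈ cS k ↔ g x ∈ cS k) ∧ g a = b := by
  obtain ⟨g, h1, h2, h3⟩ := hhom 1 (fun _ => a) (fun _ => b) (fun φ => by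
    have := h (φ.relabel (fun _ : Fin 1 => ()))
    rwa [sat_relabel_const, sat_relabel_const] at this)
  exact ⟨g, h1, h2, h3 0⟩

/-! ### Saturation: extraction -/

lemma sat_extract {S : Type} [LinearOrder S] (cS : ι → Set S)
    (hsat : Aleph0Saturated ι S cS) (a b : S)
    (γ : (CLOLang ι).Formula (Unit ⊕ Fin 1)) :
    (∃ x : S, Sat S cS γ (Sum.elim (fun _ => x) (fun _ => b)) ∧
      ∀ θ : (CLOLang ι).Formula Unit,
        Sat S cS θ (fun _ => a) → Sat S cS θ (fun _ => x)) ∨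
    (∃ φ : (CLOLang ι).Formula Unit, Sat S cS φ (fun _ => a) ∧
      ∀ x : S, Sat S cS φ (fun _ => x) →
        ¬ Sat S cS γ (Sum.elim (fun _ => x) (fun _ => b))) := by
  classical
  set p : Set ((CLOLang ι).Formula (Unit ⊕ Fin 1)) :=
    (fun θ : (CLOLang ι).Formula Unit => θ.relabel Sum.inl ⊓ γ) ''
      {θ | Sat S cS θ (fun _ => a)} with hp
  by_cases hfs : ∀ q : Finset ((CLOLang ι).Formula (Unit ⊕ Fin 1)), ↑q ⊆ p →
      ∃ x : S, ∀ ψ ∈ q, Sat S cS ψ (Sum.elim (fun _ => x) (fun _ => b))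
  · obtain ⟨x, hx⟩ := hsat 1 (fun _ => b) p hfs
    left
    have htop : (⊤ : (CLOLang ι).Formula Unit) ∈ {θ | Sat S cS θ (fun _ => a)} :=
      sat_top cS _
    have h1 := hx _ (mem_image_of_mem _ htop)
    rw [sat_inf] at h1
    refine ⟨x, h1.2, fun θ hθ => ?_⟩
    have h2 := hx _ (mem_image_of_mem _ hθ)
    rw [sat_inf] at h2
    exact (sat_relabel_inl cS θ x _).1 h2.1
  · right
    push_neg at hfs
    obtain ⟨q, hq, hns⟩ := hfs
    have hmem : ∀ ψ ∈ q, ∃ θ : (CLOLang ι).Formula Unit,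
        Sat S cS θ (fun _ => a) ∧ θ.relabel Sum.inl ⊓ γ = ψ := by
      intro ψ hψ
      obtain ⟨θ, hθ, hθψ⟩ := hq hψ
      exact ⟨θ, hθ, hθψ⟩
    choose F hF1 hF2 using hmem
    set l : List ((CLOLang ι).Formula Unit) :=
      q.toList.attach.map (fun ψ => F ψ.1 (Finset.mem_toList.1 ψ.2)) with hl
    refine ⟨listConj l, ?_, ?_⟩
    · rw [sat_listConj]
      intro θ hθ
      rw [hl, List.mem_map] at hθ
      obtain ⟨ψ, _, rfl⟩ := hθ
      exact hF1 _ _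
    · intro x hφ hγx
      obtain ⟨ψ, hψq, hnψ⟩ := hns x
      apply hnψ
      rw [← hF2 ψ hψq, sat_inf]
      refine ⟨(sat_relabel_inl cS _ x _).2 ?_, hγx⟩
      refine (sat_listConj cS l _).1 hφ _ ?_
      rw [hl, List.mem_map]
      exact ⟨⟨ψ, Finset.mem_toList.2 hψq⟩, List.mem_attach _ _, rfl⟩

/-! ### Nonemptiness of the set of realizations of a convex type -/

lemma typeSet_nonempty {M₀ : Type} [LinearOrder M₀] (c₀ : ι → Set M₀)
    {S : Type} [LinearOrder S] (cS : ι → Set S)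
    (hS : CLOEquiv ι S cS M₀ c₀) (hsat : Aleph0Saturated ι S cS)
    (Φ : Set ((CLOLang ι).Formula Unit)) (hΦ : TypeConsistent ι M₀ c₀ Φ) :
    ∃ x : S, x ∈ TypeSet ι S cS Φ := by
  classical
  obtain ⟨B, iB, cB, hB, b, hb⟩ := hΦ
  set p : Set ((CLOLang ι).Formula (Unit ⊕ Fin 0)) :=
    (fun θ : (CLOLang ι).Formula Unit => θ.relabel Sum.inl) '' Φ with hp
  have hfs : ∀ q : Finset ((CLOLang ι).Formula (Unit ⊕ Fin 0)), ↑q ⊆ p →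
      ∃ x : S, ∀ ψ ∈ q, Sat S cS ψ (Sum.elim (fun _ => x) (fun i : Fin 0 => i.elim0)) := by
    intro q hq
    have hmem : ∀ ψ ∈ q, ∃ θ : (CLOLang ι).Formula Unit,
        θ ∈ Φ ∧ θ.relabel Sum.inl = ψ := by
      intro ψ hψ
      obtain ⟨θ, hθ, hθψ⟩ := hq hψ
      exact ⟨θ, hθ, hθψ⟩
    choose F hF1 hF2 using hmem
    set l : List ((CLOLang ι).Formula Unit) :=
      q.toList.attach.map (fun ψ => F ψ.1 (Finset.mem_toList.1 ψ.2)) with hl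
    have hBex : (letI := iB; letI := CLOStr ι B cB; B ⊨ exFml (listConj l)) := by
      letI := iB
      rw [sat_exFml]
      refine ⟨b, (sat_listConj cB l _).2 fun θ hθ => ?_⟩
      rw [hl, List.mem_map] at hθ
      obtain ⟨ψ, _, rfl⟩ := hθ
      exact hb _ (hF1 _ _)
    have hSB : (letI := CLOStr ι S cS; letI := iB; letI := CLOStr ι B cB;
        S ≅[CLOLang ι] B) := by
      letI := iB
      letI := CLOStr ι S cS
      letI := CLOStr ι B cB
      letI := CLOStr ι M₀ c₀
      exact hS.trans hB.symm
    have hSex : (letI := CLOStr ι S cS; S ⊨ exFml (listConj l)) := by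
      letI := iB
      letI := CLOStr ι S cS
      letI := CLOStr ι B cB
      exact (hSB.realize_sentence _).2 hBex
    rw [sat_exFml] at hSex
    obtain ⟨x, hx⟩ := hSex
    refine ⟨x, fun ψ hψ => ?_⟩
    rw [← hF2 ψ hψ]
    refine (sat_relabel_inl cS _ x _).2 ?_
    refine (sat_listConj cS l _).1 hx _ ?_
    rw [hl, List.mem_map]
    exact ⟨⟨ψ, Finset.mem_toList.2 hψ⟩, List.mem_attach _ _, rfl⟩
  obtain ⟨x, hx⟩ := hsat 0 (fun i : Fin 0 => i.elim0) p hfs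
  refine ⟨x, fun θ hθ => ?_⟩
  exact (sat_relabel_inl cS θ x _).1 (hx _ (mem_image_of_mem _ hθ))

/-! ### Transport along automorphisms within the realization set of a type -/

lemma mem_typeSet_equiv {S : Type} [LinearOrder S] (cS : ι → Set S) (g : S ≃ S)
    (hlt : ∀ x y : S, x < y ↔ g x < g y) (hc : ∀ (k : ι) (x : S), x ∈ cS k ↔ g x ∈ cS k)
    (Φ : Set ((CLOLang ι).Formula Unit)) (x : S) :
    x ∈ TypeSet ι S cS Φ ↔ g x ∈ TypeSet ι S cS Φ := by
  constructor
  · intro hx θ hθ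
    exact (sat_equiv' cS g hlt hc θ x).2 (hx θ hθ)
  · intro hx θ hθ
    exact (sat_equiv' cS g hlt hc θ x).1 (hx θ hθ)

lemma copy_in_D {S : Type} [LinearOrder S] (cS : ι → Set S)
    (Φ : Set ((CLOLang ι).Formula Unit)) (g : S ≃ S)
    (hlt : ∀ x y : S, x < y ↔ g x < g y) (hc : ∀ (k : ι) (x : S), x ∈ cS k ↔ g x ∈ cS k)
    (φ : (CLOLang ι).Formula Unit)
    (a : ↥(TypeSet ι S cS Φ)) (x : S) (hxT : x ∈ TypeSet ι S cS Φ)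
    (hga : g a.1 = x)
    (haD : a ∈ FmlSet ι (↥(TypeSet ι S cS Φ)) (subColor cS (TypeSet ι S cS Φ)) φ) :
    (⟨x, hxT⟩ : ↥(TypeSet ι S cS Φ)) ∈
      FmlSet ι (↥(TypeSet ι S cS Φ)) (subColor cS (TypeSet ι S cS Φ)) φ := by
  let G : ↥(TypeSet ι S cS Φ) ≃ ↥(TypeSet ι S cS Φ) :=
    g.subtypeEquiv (fun z => mem_typeSet_equiv cS g hlt hc Φ z)
  have hlt' : ∀ u v : ↥(TypeSet ι S cS Φ), u < v ↔ G u < G v := by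
    intro u v
    rw [← Subtype.coe_lt_coe, ← Subtype.coe_lt_coe]
    exact hlt u.1 v.1
  have hc' : ∀ (k : ι) (u : ↥(TypeSet ι S cS Φ)),
      u ∈ subColor cS (TypeSet ι S cS Φ) k ↔ G u ∈ subColor cS (TypeSet ι S cS Φ) k :=
    fun k u => hc k u.1
  have key := sat_equiv (subColor cS (TypeSet ι S cS Φ)) G hlt' hc' φ (fun _ => a)
  have h2 : Sat (↥(TypeSet ι S cS Φ)) (subColor cS (TypeSet ι S cS Φ)) φ
      (fun _ => G a) := key.2 haD
  have h3 : G a = ⟨x, hxT⟩ := Subtype.ext hga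
  rw [h3] at h2
  exact h2

/-! ### The two main contradiction lemmas -/

lemma main_lt {M₀ : Type} [LinearOrder M₀] (c₀ : ι → Set M₀)
    {S : Type} [LinearOrder S] (cS : ι → Set S)
    (hS : CLOEquiv ι S cS M₀ c₀) (hsat : SuffSaturated ι S cS)
    (Φ : Set ((CLOLang ι).Formula Unit)) (hΦ : IsConvexType ι M₀ c₀ Φ)
    (φ : (CLOLang ι).Formula Unit)
    (hconv : (FmlSet ι (↥(TypeSet ι S cS Φ)) (subColor cS (TypeSet ι S cS Φ)) φ).OrdConnected)
    (a b : ↥(TypeSet ι S cS Φ)) (hab : a < b)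
    (θ' : (CLOLang ι).Formula Unit)
    (hθa : Sat S cS θ' (fun _ => a.1)) (hθb : ¬ Sat S cS θ' (fun _ => b.1))
    (haD : a ∈ FmlSet ι (↥(TypeSet ι S cS Φ)) (subColor cS (TypeSet ι S cS Φ)) φ)
    (hbD : b ∉ FmlSet ι (↥(TypeSet ι S cS Φ)) (subColor cS (TypeSet ι S cS Φ)) φ) :
    False := by
  rcases sat_extract cS hsat.1 a.1 b.1 gtFml with ⟨x, hγ, himp⟩ | ⟨φ₀, ha0, hbd⟩
  · rw [sat_gtFml] at hγ
    have htp := tp_iff_of_imp cS a.1 x himp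
    have hxT : x ∈ TypeSet ι S cS Φ := fun θ hθ => (htp θ).1 (a.2 θ hθ)
    obtain ⟨g, hlt, hc, hga⟩ := exists_auto cS hsat.2 a.1 x htp
    have hxD := copy_in_D cS Φ g hlt hc φ a x hxT hga haD
    apply hbD
    refine hconv.out haD hxD ⟨hab.le, ?_⟩
    exact Subtype.coe_le_coe.1 hγ.le
  · set φ₂ := φ₀ ⊓ θ' with hφ₂
    have haφ₂ : Sat S cS φ₂ (fun _ => a.1) := (sat_inf cS φ₀ θ' _).2 ⟨ha0, hθa⟩
    have hψconv : ConvexFml ι M₀ c₀ (dnFml φ₂) := by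
      intro B iB cB _
      letI := iB
      constructor
      intro x hx y hy z hz
      obtain ⟨w, hw, hyw⟩ := (sat_dnFml cB φ₂ y).1 hy
      exact (sat_dnFml cB φ₂ z).2 ⟨w, hw, hz.2.trans hyw⟩
    have hψcons : TypeConsistent ι M₀ c₀ (insert (dnFml φ₂) Φ) := by
      refine ⟨S, inferInstance, cS, hS, a.1, ?_⟩
      intro θ hθ
      rcases Set.mem_insert_iff.1 hθ with rfl | hθ'
      · exact (sat_dnFml cS φ₂ a.1).2 ⟨a.1, haφ₂, le_refl _⟩
      · exact a.2 θ hθ'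
    have hψΦ := hΦ.2.2 _ hψconv hψcons
    have hbψ := b.2 _ hψΦ
    obtain ⟨y, hyφ₂, hby⟩ := (sat_dnFml cS φ₂ b.1).1 hbψ
    rw [sat_inf] at hyφ₂
    have hy_le : y ≤ b.1 :=
      not_lt.1 (fun h => (hbd y hyφ₂.1) ((sat_gtFml cS y b.1).2 h))
    have hyb : y = b.1 := le_antisymm hy_le hby
    exact hθb (hyb ▸ hyφ₂.2)

lemma main_gt {M₀ : Type} [LinearOrder M₀] (c₀ : ι → Set M₀)
    {S : Type} [LinearOrder S] (cS : ι → Set S)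
    (hS : CLOEquiv ι S cS M₀ c₀) (hsat : SuffSaturated ι S cS)
    (Φ : Set ((CLOLang ι).Formula Unit)) (hΦ : IsConvexType ι M₀ c₀ Φ)
    (φ : (CLOLang ι).Formula Unit)
    (hconv : (FmlSet ι (↥(TypeSet ι S cS Φ)) (subColor cS (TypeSet ι S cS Φ)) φ).OrdConnected)
    (a b : ↥(TypeSet ι S cS Φ)) (hab : b < a)
    (θ' : (CLOLang ι).Formula Unit)
    (hθa : Sat S cS θ' (fun _ => a.1)) (hθb : ¬ Sat S cS θ' (fun _ => b.1))
    (haD : a ∈ FmlSet ι (↥(TypeSet ι S cS Φ)) (subColor cS (TypeSet ι S cS Φ)) φ)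
    (hbD : b ∉ FmlSet ι (↥(TypeSet ι S cS Φ)) (subColor cS (TypeSet ι S cS Φ)) φ) :
    False := by
  rcases sat_extract cS hsat.1 a.1 b.1 ltFml with ⟨x, hγ, himp⟩ | ⟨φ₀, ha0, hbd⟩
  · rw [sat_ltFml] at hγ
    have htp := tp_iff_of_imp cS a.1 x himp
    have hxT : x ∈ TypeSet ι S cS Φ := fun θ hθ => (htp θ).1 (a.2 θ hθ)
    obtain ⟨g, hlt, hc, hga⟩ := exists_auto cS hsat.2 a.1 x htp
    have hxD := copy_in_D cS Φ g hlt hc φ a x hxT hga haD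
    apply hbD
    refine hconv.out hxD haD ⟨?_, hab.le⟩
    exact Subtype.coe_le_coe.1 hγ.le
  · set φ₂ := φ₀ ⊓ θ' with hφ₂
    have haφ₂ : Sat S cS φ₂ (fun _ => a.1) := (sat_inf cS φ₀ θ' _).2 ⟨ha0, hθa⟩
    have hψconv : ConvexFml ι M₀ c₀ (upFml φ₂) := by
      intro B iB cB _
      letI := iB
      constructor
      intro x hx y hy z hz
      obtain ⟨w, hw, hwx⟩ := (sat_upFml cB φ₂ x).1 hx
      exact (sat_upFml cB φ₂ z).2 ⟨w, hw, hwx.trans hz.1⟩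
    have hψcons : TypeConsistent ι M₀ c₀ (insert (upFml φ₂) Φ) := by
      refine ⟨S, inferInstance, cS, hS, a.1, ?_⟩
      intro θ hθ
      rcases Set.mem_insert_iff.1 hθ with rfl | hθ'
      · exact (sat_upFml cS φ₂ a.1).2 ⟨a.1, haφ₂, le_refl _⟩
      · exact a.2 θ hθ'
    have hψΦ := hΦ.2.2 _ hψconv hψcons
    have hbψ := b.2 _ hψΦ
    obtain ⟨y, hyφ₂, hyb⟩ := (sat_upFml cS φ₂ b.1).1 hbψ
    rw [sat_inf] at hyφ₂
    have hy_ge : b.1 ≤ y :=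
      not_lt.1 (fun h => (hbd y hyφ₂.1) ((sat_ltFml cS y b.1).2 h))
    have hyb' : y = b.1 := le_antisymm hyb hy_ge
    exact hθb (hyb' ▸ hyφ₂.2)

end Stmt10Aux

theorem stmt10 {ι : Type} [Countable ι] {M₀ : Type} [LinearOrder M₀] (c₀ : ι → Set M₀)
    {S : Type} [LinearOrder S] (cS : ι → Set S)
    (hS : CLOEquiv ι S cS M₀ c₀) (hsat : SuffSaturated ι S cS)
    (Φ : Set ((CLOLang ι).Formula Unit)) (hΦ : IsConvexType ι M₀ c₀ Φ) :
    (∃ x : S, TypeSet ι S cS Φ = {x}) ∨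
      SelfAdditive ι (↥(TypeSet ι S cS Φ)) (subColor cS (TypeSet ι S cS Φ)) := by
  classical
  obtain ⟨x0, hx0⟩ := Stmt10Aux.typeSet_nonempty c₀ cS hS hsat.1 Φ hΦ.2.1
  by_cases htriv : ∀ x ∈ TypeSet ι S cS Φ, ∀ y ∈ TypeSet ι S cS Φ, x = y
  · exact Or.inl ⟨x0, Set.eq_singleton_iff_unique_mem.2 ⟨hx0, fun y hy => htriv y hy x0 hx0⟩⟩
  · right
    push_neg at htriv
    obtain ⟨u, hu, v, hv, huv⟩ := htriv
    refine ⟨⟨⟨u, hu⟩, ⟨v, hv⟩, fun h => huv (congrArg Subtype.val h)⟩, ?_⟩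
    intro φ hconv
    by_contra hcon
    push_neg at hcon
    obtain ⟨hne, hnuniv⟩ := hcon
    obtain ⟨a, haD⟩ := hne
    obtain ⟨b, hbD⟩ : ∃ b, b ∉ FmlSet ι (↥(TypeSet ι S cS Φ))
        (subColor cS (TypeSet ι S cS Φ)) φ := by
      by_contra h
      push_neg at h
      exact hnuniv (Set.eq_univ_of_forall h)
    have hne_tp : ¬ ∀ θ : (CLOLang ι).Formula Unit,
        Sat S cS θ (fun _ => a.1) ↔ Sat S cS θ (fun _ => b.1) := by
      intro htp
      obtain ⟨g, hlt, hc, hga⟩ := Stmt10Aux.exists_auto cS hsat.2 a.1 b.1 htp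
      have hb' := Stmt10Aux.copy_in_D cS Φ g hlt hc φ a b.1 b.2 hga haD
      exact hbD hb'
    push_neg at hne_tp
    obtain ⟨θ, hθ⟩ := hne_tp
    obtain ⟨θ', hθa, hθb⟩ : ∃ θ' : (CLOLang ι).Formula Unit,
        Sat S cS θ' (fun _ => a.1) ∧ ¬ Sat S cS θ' (fun _ => b.1) := by
      rcases hθ with ⟨h1, h2⟩ | ⟨h1, h2⟩
      · exact ⟨θ, h1, h2⟩
      · exact ⟨θ.not, (Stmt10Aux.sat_not cS θ _).2 h1,
          fun hn => (Stmt10Aux.sat_not cS θ _).1 hn h2⟩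
    rcases lt_trichotomy a b with h | h | h
    · exact Stmt10Aux.main_lt c₀ cS hS hsat Φ hΦ φ hconv a b h θ' hθa hθb haD hbD
    · exact hbD (h ▸ haD)
    · exact Stmt10Aux.main_gt c₀ cS hS hsat Φ hΦ φ hconv a b h θ' hθa hθb haD hbD
end

section
/- Let S₁ and S₂ be sufficiently saturated models of a complete CLO theory T and let Φ ∈ IT(T). Then the L_κ-structures Φ(S₁) and Φ(S₂) are back-and-forth equivalent; in particular, they are elementarily equivalent. -/
open FirstOrder Language Set

/-! ### Auxiliary machinery for `stmt11` -/

section Aux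

variable {ι : Type} {M N : Type} [LinearOrder M] [LinearOrder N]

/-- Every `CLOLang` term is a variable (there are no function symbols). -/
lemma clo_term_var {α : Type} (t : (CLOLang ι).Term α) : ∃ j : α, t = Term.var j := by
  cases t with
  | var j => exact ⟨j, rfl⟩
  | func f ts => exact Empty.elim f

lemma sat_relabel {c : ι → Set M} {α β : Type} (φ : (CLOLang ι).Formula α) (g : α → β)
    (v : β → M) : Sat M c (φ.relabel g) v ↔ Sat M c φ (v ∘ g) := by
  letI := CLOStr ι M c
  exact Formula.realize_relabel

lemma sat_not {c : ι → Set M} {α : Type} (φ : (CLOLang ι).Formula α) (v : α → M) :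
    Sat M c φ.not v ↔ ¬ Sat M c φ v := by
  letI := CLOStr ι M c
  exact Formula.realize_not

lemma sat_foldr_inf {c : ι → Set M} {α : Type} (l : List ((CLOLang ι).Formula α)) (v : α → M) :
    Sat M c (l.foldr (· ⊓ ·) ⊤) v ↔ ∀ φ ∈ l, Sat M c φ v := by
  letI := CLOStr ι M c
  induction l with
  | nil =>
    have htop : Sat M c (⊤ : (CLOLang ι).Formula α) v := BoundedFormula.realize_top.2 trivial
    exact iff_of_true htop (by intro φ h; exact absurd h List.not_mem_nil)
  | cons φ l ih =>
    rw [List.foldr_cons]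
    constructor
    · intro hI ψ hψ
      have hand : Sat M c φ v ∧ Sat M c (l.foldr (· ⊓ ·) ⊤) v := BoundedFormula.realize_inf.1 hI
      rcases List.mem_cons.1 hψ with rfl | hψ
      · exact hand.1
      · exact ih.1 hand.2 ψ hψ
    · intro hAll
      exact BoundedFormula.realize_inf.2 ⟨hAll φ List.mem_cons_self,
        ih.2 fun ψ hψ => hAll ψ (List.mem_cons_of_mem _ hψ)⟩

lemma sat_ltFml {c : ι → Set M} (v : Fin 2 → M) :
    Sat M c (Relations.formula CLORel.lt (fun i => Term.var i)) v ↔ v 0 < v 1 := by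
  letI := CLOStr ι M c
  have h := Formula.realize_rel (L := CLOLang ι) (M := M) (R := CLORel.lt)
    (ts := fun i => Term.var i) (v := v)
  exact h.trans Iff.rfl

lemma sat_eqFml {c : ι → Set M} (v : Fin 2 → M) :
    Sat M c ((Term.var (0 : Fin 2)).equal (Term.var 1)) v ↔ v 0 = v 1 := by
  letI := CLOStr ι M c
  exact Formula.realize_equal.trans Iff.rfl

lemma sat_colorFml {c : ι → Set M} (k : ι) (v : Fin 1 → M) :
    Sat M c (Relations.formula (CLORel.color k) (fun i => Term.var i)) v ↔ v 0 ∈ c k := by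
  letI := CLOStr ι M c
  have h := Formula.realize_rel (L := CLOLang ι) (M := M) (R := CLORel.color k)
    (ts := fun i => Term.var i) (v := v)
  exact h.trans Iff.rfl

/-- The key family: finite partial maps all of whose matched tuples have the same
complete type in the ambient models. -/
def Good (cM : ι → Set M) (cN : ι → Set N) (Φ : Set ((CLOLang ι).Formula Unit))
    (f : Finset (↥(TypeSet ι M cM Φ) × ↥(TypeSet ι N cN Φ))) : Prop :=
  ∀ (k : ℕ) (p : Fin k → ↥(TypeSet ι M cM Φ) × ↥(TypeSet ι N cN Φ)),
    (∀ i, p i ∈ f) → ∀ φ : (CLOLang ι).Formula (Fin k),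
      (Sat M cM φ fun i => ((p i).1 : M)) ↔ (Sat N cN φ fun i => ((p i).2 : N))

variable {cM : ι → Set M} {cN : ι → Set N} {Φ : Set ((CLOLang ι).Formula Unit)}

lemma good_empty (hT : CLOEquiv ι M cM N cN) : Good cM cN Φ ∅ := by
  intro k p hp φ
  cases k with
  | succ k => exact absurd (hp 0) (by simp)
  | zero =>
    letI := CLOStr ι M cM
    letI := CLOStr ι N cN
    have h : (M ⊨ φ.relabel fun i : Fin 0 => i.elim0) ↔
        (N ⊨ φ.relabel fun i : Fin 0 => i.elim0) :=
      elementarilyEquivalent_iff.1 hT _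
    have hM : (M ⊨ φ.relabel fun i : Fin 0 => i.elim0) ↔ Sat M cM φ fun i => ((p i).1 : M) := by
      rw [show (M ⊨ φ.relabel fun i : Fin 0 => i.elim0) ↔
        φ.Realize ((default : Empty → M) ∘ fun i : Fin 0 => i.elim0) from Formula.realize_relabel]
      exact iff_of_eq (congrArg _ (funext fun i => i.elim0))
    have hN : (N ⊨ φ.relabel fun i : Fin 0 => i.elim0) ↔ Sat N cN φ fun i => ((p i).2 : N) := by
      rw [show (N ⊨ φ.relabel fun i : Fin 0 => i.elim0) ↔
        φ.Realize ((default : Empty → N) ∘ fun i : Fin 0 => i.elim0) from Formula.realize_relabel]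
      exact iff_of_eq (congrArg _ (funext fun i => i.elim0))
    exact hM.symm.trans (h.trans hN)

lemma good_swap {f} (hf : Good cM cN Φ f) : Good cN cM Φ (f.image Prod.swap) := by
  intro k p hp φ
  have hp' : ∀ i, Prod.swap (p i) ∈ f := by
    intro i
    rcases Finset.mem_image.1 (hp i) with ⟨x, hx, he⟩
    rw [← he, Prod.swap_swap]
    exact hx
  exact (hf k (fun i => Prod.swap (p i)) hp' φ).symm

lemma good_forth (hsatN : Aleph0Saturated ι N cN) {f} (hf : Good cM cN Φ f)
    (m : ↥(TypeSet ι M cM Φ)) :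
    ∃ n : ↥(TypeSet ι N cN Φ), Good cM cN Φ (insert (m, n) f) := by
  classical
  let k := f.card
  let e := f.equivFin
  let p : Fin k → ↥(TypeSet ι M cM Φ) × ↥(TypeSet ι N cN Φ) := fun i => (e.symm i : _)
  have hpf : ∀ i, p i ∈ f := fun i => (e.symm i).2
  let va : Fin k → M := fun i => ((p i).1 : M)
  let vb : Fin k → N := fun i => ((p i).2 : N)
  let P : Set ((CLOLang ι).Formula (Unit ⊕ Fin k)) :=
    {φ | Sat M cM φ (Sum.elim (fun _ => (m : M)) va)}
  have hfin : ∀ q : Finset ((CLOLang ι).Formula (Unit ⊕ Fin k)), ↑q ⊆ P →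
      ∃ x : N, ∀ φ ∈ q, Sat N cN φ (Sum.elim (fun _ => x) vb) := by
    intro q hq
    let conj : (CLOLang ι).Formula (Unit ⊕ Fin k) := q.toList.foldr (· ⊓ ·) ⊤
    have hm : Sat M cM conj (Sum.elim (fun _ => (m : M)) va) := by
      rw [sat_foldr_inf]
      intro φ hφ
      exact hq (Finset.mem_coe.2 (Finset.mem_toList.1 hφ))
    let ψ : (CLOLang ι).Formula (Fin k) := (conj.relabel Sum.swap).iExs Unit
    have hψM : Sat M cM ψ va := by
      letI := CLOStr ι M cM
      rw [show Sat M cM ψ va ↔ _ from Formula.realize_iExs]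
      refine ⟨fun _ => (m : M), ?_⟩
      refine Formula.realize_relabel.2 ?_
      show conj.Realize (fun a : Unit ⊕ Fin k => Sum.elim va (fun _ : Unit => (m : M)) (Sum.swap a))
      have hv : (fun a : Unit ⊕ Fin k => Sum.elim va (fun _ : Unit => (m : M)) (Sum.swap a)) =
          Sum.elim (fun _ : Unit => (m : M)) va :=
        funext fun a => by cases a <;> rfl
      rw [hv]
      exact hm
    have hψN : Sat N cN ψ vb := (hf k p hpf ψ).1 hψM
    letI := CLOStr ι N cN
    rw [show Sat N cN ψ vb ↔ _ from Formula.realize_iExs] at hψN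
    obtain ⟨w, hw⟩ := hψN
    replace hw : conj.Realize (fun a : Unit ⊕ Fin k => Sum.elim vb w (Sum.swap a)) :=
      Formula.realize_relabel.1 hw
    refine ⟨w (), fun φ hφ => ?_⟩
    have hv : (fun a : Unit ⊕ Fin k => Sum.elim vb w (Sum.swap a)) =
        Sum.elim (fun _ : Unit => w ()) vb :=
      funext fun a => by cases a with
        | inl u => cases u; rfl
        | inr j => rfl
    rw [hv] at hw
    have hw' : Sat N cN conj (Sum.elim (fun _ => w ()) vb) := hw
    rw [sat_foldr_inf] at hw'
    exact hw' φ (Finset.mem_toList.2 hφ)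
  obtain ⟨n₀, hn₀⟩ := hsatN k vb P hfin
  have hmem : n₀ ∈ TypeSet ι N cN Φ := by
    intro θ hθ
    have h1 : (θ.relabel (Sum.inl : Unit → Unit ⊕ Fin k)) ∈ P := by
      show Sat M cM _ _
      rw [sat_relabel]
      exact m.2 θ hθ
    have h2 := hn₀ _ h1
    rw [sat_relabel] at h2
    exact h2
  refine ⟨⟨n₀, hmem⟩, ?_⟩
  intro k' p' hp' φ
  let j : Fin k' → Unit ⊕ Fin k := fun i =>
    if h : p' i ∈ f then Sum.inr (e ⟨p' i, h⟩) else Sum.inl ()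
  have hj1 : (fun i => ((p' i).1 : M)) = (Sum.elim (fun _ => (m : M)) va) ∘ j := by
    funext i
    by_cases h : p' i ∈ f
    · have hp : p (e ⟨p' i, h⟩) = p' i := by
        show ((e.symm (e ⟨p' i, h⟩) : ↥f) : _) = p' i
        rw [Equiv.symm_apply_apply]
      simp only [Function.comp, j, dif_pos h, Sum.elim_inr, va, hp]
    · have hpm : p' i = (m, ⟨n₀, hmem⟩) := by
        rcases Finset.mem_insert.1 (hp' i) with h' | h'
        · exact h'
        · exact absurd h' h
      simp only [Function.comp, j, dif_neg h, Sum.elim_inl, hpm]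
  have hj2 : (fun i => ((p' i).2 : N)) = (Sum.elim (fun _ => n₀) vb) ∘ j := by
    funext i
    by_cases h : p' i ∈ f
    · have hp : p (e ⟨p' i, h⟩) = p' i := by
        show ((e.symm (e ⟨p' i, h⟩) : ↥f) : _) = p' i
        rw [Equiv.symm_apply_apply]
      simp only [Function.comp, j, dif_pos h, Sum.elim_inr, vb, hp]
    · have hpm : p' i = (m, ⟨n₀, hmem⟩) := by
        rcases Finset.mem_insert.1 (hp' i) with h' | h'
        · exact h'
        · exact absurd h' h
      simp only [Function.comp, j, dif_neg h, Sum.elim_inl, hpm]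
  have key : ∀ χ : (CLOLang ι).Formula (Unit ⊕ Fin k),
      Sat M cM χ (Sum.elim (fun _ => (m : M)) va) ↔ Sat N cN χ (Sum.elim (fun _ => n₀) vb) := by
    intro χ
    constructor
    · intro h
      exact hn₀ χ h
    · intro h
      by_contra hc
      have hmem' : χ.not ∈ P := (sat_not χ _).2 hc
      exact (sat_not χ _).1 (hn₀ χ.not hmem') h
  calc (Sat M cM φ fun i => ((p' i).1 : M))
      ↔ Sat M cM (φ.relabel j) (Sum.elim (fun _ => (m : M)) va) := by
        rw [sat_relabel, ← hj1]
    _ ↔ Sat N cN (φ.relabel j) (Sum.elim (fun _ => n₀) vb) := key _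
    _ ↔ (Sat N cN φ fun i => ((p' i).2 : N)) := by
        rw [sat_relabel, ← hj2]

lemma good_back (hsatM : Aleph0Saturated ι M cM) {f} (hf : Good cM cN Φ f)
    (n : ↥(TypeSet ι N cN Φ)) :
    ∃ m : ↥(TypeSet ι M cM Φ), Good cM cN Φ (insert (m, n) f) := by
  obtain ⟨a, ha⟩ := good_forth hsatM (good_swap hf) n
  refine ⟨a, ?_⟩
  have h := good_swap ha
  rwa [Finset.image_insert, show Prod.swap (n, a) = (a, n) from rfl, Finset.image_image,
    show (Prod.swap ∘ Prod.swap : _ → ↥(TypeSet ι M cM Φ) × ↥(TypeSet ι N cN Φ)) = id from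
      funext fun x => Prod.swap_swap x, Finset.image_id] at h

lemma good_lt {f} (hf : Good cM cN Φ f) {x₁ x₂ : ↥(TypeSet ι M cM Φ)}
    {y₁ y₂ : ↥(TypeSet ι N cN Φ)} (h1 : (x₁, y₁) ∈ f) (h2 : (x₂, y₂) ∈ f) :
    ((x₁ : M) < x₂ ↔ (y₁ : N) < y₂) := by
  have h := hf 2 ![(x₁, y₁), (x₂, y₂)] (by
      intro i
      fin_cases i
      · exact h1
      · exact h2) (Relations.formula CLORel.lt (fun i => Term.var i))
  rwa [sat_ltFml, sat_ltFml] at h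

lemma good_eq {f} (hf : Good cM cN Φ f) {x₁ x₂ : ↥(TypeSet ι M cM Φ)}
    {y₁ y₂ : ↥(TypeSet ι N cN Φ)} (h1 : (x₁, y₁) ∈ f) (h2 : (x₂, y₂) ∈ f) :
    (x₁ = x₂ ↔ y₁ = y₂) := by
  have h := hf 2 ![(x₁, y₁), (x₂, y₂)] (by
      intro i
      fin_cases i
      · exact h1
      · exact h2) ((Term.var (0 : Fin 2)).equal (Term.var 1))
  rw [sat_eqFml, sat_eqFml] at h
  simpa [Subtype.ext_iff] using h

lemma good_color {f} (hf : Good cM cN Φ f) {x₁ : ↥(TypeSet ι M cM Φ)}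
    {y₁ : ↥(TypeSet ι N cN Φ)} (h1 : (x₁, y₁) ∈ f) (k : ι) :
    ((x₁ : M) ∈ cM k ↔ (y₁ : N) ∈ cN k) := by
  have h := hf 1 ![(x₁, y₁)] (by
      intro i
      fin_cases i
      exact h1) (Relations.formula (CLORel.color k) (fun i => Term.var i))
  rwa [sat_colorFml, sat_colorFml] at h

/-- Realization of a bounded formula (over `Empty`) in the induced substructure. -/
def SatB {X : Type} [LinearOrder X] (cX : ι → Set X) {n : ℕ}
    (φ : (CLOLang ι).BoundedFormula Empty n) (xs : Fin n → X) : Prop :=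
  letI := CLOStr ι X cX
  φ.Realize Empty.elim xs

lemma good_realize (hsatM : Aleph0Saturated ι M cM) (hsatN : Aleph0Saturated ι N cN) :
    ∀ {n : ℕ} (φ : (CLOLang ι).BoundedFormula Empty n)
      (f : Finset (↥(TypeSet ι M cM Φ) × ↥(TypeSet ι N cN Φ))), Good cM cN Φ f →
      ∀ (x : Fin n → ↥(TypeSet ι M cM Φ)) (y : Fin n → ↥(TypeSet ι N cN Φ)),
        (∀ i, (x i, y i) ∈ f) →
        (SatB (subColor cM (TypeSet ι M cM Φ)) φ x ↔
          SatB (subColor cN (TypeSet ι N cN Φ)) φ y) := by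
  intro n φ
  induction φ with
  | falsum => exact fun f hf x y hxy => Iff.rfl
  | equal t₁ t₂ =>
    intro f hf x y hxy
    obtain ⟨j₁, rfl⟩ := clo_term_var t₁
    obtain ⟨j₂, rfl⟩ := clo_term_var t₂
    rcases j₁ with e | j₁
    · exact Empty.elim e
    rcases j₂ with e | j₂
    · exact Empty.elim e
    show x j₁ = x j₂ ↔ y j₁ = y j₂
    exact good_eq hf (hxy j₁) (hxy j₂)
  | rel R ts =>
    intro f hf x y hxy
    cases R with
    | lt =>
      obtain ⟨j₁, h₁⟩ := clo_term_var (ts 0)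
      obtain ⟨j₂, h₂⟩ := clo_term_var (ts 1)
      rcases j₁ with e | j₁
      · exact Empty.elim e
      rcases j₂ with e | j₂
      · exact Empty.elim e
      have e1 : SatB (subColor cM (TypeSet ι M cM Φ)) (BoundedFormula.rel CLORel.lt ts) x ↔
          x j₁ < x j₂ := by
        letI := CLOStr ι (↥(TypeSet ι M cM Φ)) (subColor cM (TypeSet ι M cM Φ))
        show Term.realize (Sum.elim Empty.elim x) (ts 0) <
            Term.realize (Sum.elim Empty.elim x) (ts 1) ↔ x j₁ < x j₂
        rw [h₁, h₂]
        exact Iff.rfl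
      have e2 : SatB (subColor cN (TypeSet ι N cN Φ)) (BoundedFormula.rel CLORel.lt ts) y ↔
          y j₁ < y j₂ := by
        letI := CLOStr ι (↥(TypeSet ι N cN Φ)) (subColor cN (TypeSet ι N cN Φ))
        show Term.realize (Sum.elim Empty.elim y) (ts 0) <
            Term.realize (Sum.elim Empty.elim y) (ts 1) ↔ y j₁ < y j₂
        rw [h₁, h₂]
        exact Iff.rfl
      rw [e1, e2, show (x j₁ < x j₂) ↔ ((x j₁ : M) < (x j₂ : M)) from Iff.rfl,
        show (y j₁ < y j₂) ↔ ((y j₁ : N) < (y j₂ : N)) from Iff.rfl]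
      exact good_lt hf (hxy j₁) (hxy j₂)
    | color k =>
      obtain ⟨j₁, h₁⟩ := clo_term_var (ts 0)
      rcases j₁ with e | j₁
      · exact Empty.elim e
      have e1 : SatB (subColor cM (TypeSet ι M cM Φ)) (BoundedFormula.rel (CLORel.color k) ts) x ↔
          ((x j₁ : M) ∈ cM k) := by
        letI := CLOStr ι (↥(TypeSet ι M cM Φ)) (subColor cM (TypeSet ι M cM Φ))
        show Term.realize (Sum.elim Empty.elim x) (ts 0) ∈
            subColor cM (TypeSet ι M cM Φ) k ↔ (x j₁ : M) ∈ cM k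
        rw [h₁]
        exact Iff.rfl
      have e2 : SatB (subColor cN (TypeSet ι N cN Φ)) (BoundedFormula.rel (CLORel.color k) ts) y ↔
          ((y j₁ : N) ∈ cN k) := by
        letI := CLOStr ι (↥(TypeSet ι N cN Φ)) (subColor cN (TypeSet ι N cN Φ))
        show Term.realize (Sum.elim Empty.elim y) (ts 0) ∈
            subColor cN (TypeSet ι N cN Φ) k ↔ (y j₁ : N) ∈ cN k
        rw [h₁]
        exact Iff.rfl
      rw [e1, e2]
      exact good_color hf (hxy j₁) k
  | imp φ₁ φ₂ ih₁ ih₂ =>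
    intro f hf x y hxy
    show (SatB _ φ₁ x → SatB _ φ₂ x) ↔ (SatB _ φ₁ y → SatB _ φ₂ y)
    rw [ih₁ f hf x y hxy, ih₂ f hf x y hxy]
  | all φ ih =>
    intro f hf x y hxy
    show (∀ a, SatB _ φ (Fin.snoc x a)) ↔ ∀ b, SatB _ φ (Fin.snoc y b)
    constructor
    · intro h b
      obtain ⟨a, hg⟩ := good_back hsatM hf b
      refine (ih _ hg (Fin.snoc x a) (Fin.snoc y b) ?_).1 (h a)
      intro i
      refine Fin.lastCases ?_ (fun i => ?_) i
      · simp only [Fin.snoc_last]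
        exact Finset.mem_insert_self _ _
      · simp only [Fin.snoc_castSucc]
        exact Finset.mem_insert_of_mem (hxy i)
    · intro h a
      obtain ⟨b, hg⟩ := good_forth hsatN hf a
      refine (ih _ hg (Fin.snoc x a) (Fin.snoc y b) ?_).2 (h b)
      intro i
      refine Fin.lastCases ?_ (fun i => ?_) i
      · simp only [Fin.snoc_last]
        exact Finset.mem_insert_self _ _
      · simp only [Fin.snoc_castSucc]
        exact Finset.mem_insert_of_mem (hxy i)

lemma sentence_satB {X : Type} [LinearOrder X] (c : ι → Set X) (φ : (CLOLang ι).Sentence) :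
    (letI := CLOStr ι X c; X ⊨ φ) ↔ SatB c φ finZeroElim := by
  letI := CLOStr ι X c
  show BoundedFormula.Realize φ (default : Empty → X) (default : Fin 0 → X) ↔
      BoundedFormula.Realize φ Empty.elim finZeroElim
  rw [show (default : Empty → X) = Empty.elim from funext fun e => e.elim,
    show (default : Fin 0 → X) = finZeroElim from funext fun i => i.elim0]

end Aux

theorem stmt11 {ι : Type} [Countable ι] {S₁ S₂ : Type} [LinearOrder S₁] [LinearOrder S₂]
    (c₁ : ι → Set S₁) (c₂ : ι → Set S₂) (hT : CLOEquiv ι S₁ c₁ S₂ c₂)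
    (hsat₁ : SuffSaturated ι S₁ c₁) (hsat₂ : SuffSaturated ι S₂ c₂)
    (Φ : Set ((CLOLang ι).Formula Unit)) (hΦ : IsConvexType ι S₁ c₁ Φ) :
    BackForthEquiv ι (↥(TypeSet ι S₁ c₁ Φ)) (subColor c₁ (TypeSet ι S₁ c₁ Φ))
        (↥(TypeSet ι S₂ c₂ Φ)) (subColor c₂ (TypeSet ι S₂ c₂ Φ)) ∧
      CLOEquiv ι (↥(TypeSet ι S₁ c₁ Φ)) (subColor c₁ (TypeSet ι S₁ c₁ Φ))
        (↥(TypeSet ι S₂ c₂ Φ)) (subColor c₂ (TypeSet ι S₂ c₂ Φ)) := by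
  constructor
  · refine ⟨{f | Good c₁ c₂ Φ f}, ⟨∅, good_empty hT⟩, ?_, ?_, ?_⟩
    · intro f hf p hp q hq
      have hp' : (p.1, p.2) ∈ f := by rwa [Prod.mk.eta]
      have hq' : (q.1, q.2) ∈ f := by rwa [Prod.mk.eta]
      refine ⟨?_, good_eq hf hp' hq', fun k => good_color hf hp' k⟩
      exact good_lt hf hp' hq'
    · intro f hf m
      obtain ⟨n, hg⟩ := good_forth hsat₂.1 hf m
      exact ⟨insert (m, n) f, hg, Finset.subset_insert _ _, n, Finset.mem_insert_self _ _⟩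
    · intro f hf n
      obtain ⟨m, hg⟩ := good_back hsat₁.1 hf n
      exact ⟨insert (m, n) f, hg, Finset.subset_insert _ _, m, Finset.mem_insert_self _ _⟩
  · have h2 : @ElementarilyEquivalent (CLOLang ι) (↥(TypeSet ι S₁ c₁ Φ)) (↥(TypeSet ι S₂ c₂ Φ))
        (CLOStr ι _ (subColor c₁ (TypeSet ι S₁ c₁ Φ)))
        (CLOStr ι _ (subColor c₂ (TypeSet ι S₂ c₂ Φ))) := by
      letI := CLOStr ι (↥(TypeSet ι S₁ c₁ Φ)) (subColor c₁ (TypeSet ι S₁ c₁ Φ))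
      letI := CLOStr ι (↥(TypeSet ι S₂ c₂ Φ)) (subColor c₂ (TypeSet ι S₂ c₂ Φ))
      refine elementarilyEquivalent_iff.2 fun φ => ?_
      rw [sentence_satB, sentence_satB]
      exact good_realize hsat₁.1 hsat₂.1 φ ∅ (good_empty hT) finZeroElim finZeroElim
        (fun i => i.elim0)
    exact h2
end
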